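/- With the dual system to {I, |0⟩⟨0|, |θ⟩⟨θ|} on ℂ² as above and θ ∈ (0, π/2), the dual element Ĩ satisfies ‖Ĩ‖ = 1/(2 cos θ) + 1/2, where ‖·‖ is the operator norm. -/

import Mathlib

open Real

/-- The projection onto `|0⟩ = (1,0)ᵀ`. -/
def proj0 : Matrix (Fin 2) (Fin 2) ℂ := !![1, 0; 0, 0]

/-- The projection onto `|θ⟩ = (cos θ, sin θ)ᵀ`. -/
noncomputable def projTheta (θ : ℝ) : Matrix (Fin 2) (Fin 2) ℂ :=
  !![((Real.cos θ : ℂ)) ^ 2, (Real.cos θ : ℂ) * (Real.sin θ : ℂ);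
     (Real.cos θ : ℂ) * (Real.sin θ : ℂ), ((Real.sin θ : ℂ)) ^ 2]

/-- Auxiliary: the dual element is the explicit matrix `!![0, -tan θ / 2; -tan θ / 2, 1]`. -/
theorem dual_identity_eq (θ : ℝ) (hθ : θ ∈ Set.Ioo 0 (π / 2))
    (Itil : Matrix (Fin 2) (Fin 2) ℂ)
    (hspan : Itil ∈
      Submodule.span ℝ (Set.range ![(1 : Matrix (Fin 2) (Fin 2) ℂ), proj0, projTheta θ]))
    (hdual : ∀ i, ((![(1 : Matrix (Fin 2) (Fin 2) ℂ), proj0, projTheta θ] i) *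
      Itil).trace = if i = 0 then 1 else 0) :
    Itil = !![0, ((-(Real.sin θ / (2 * Real.cos θ)) : ℝ) : ℂ);
              ((-(Real.sin θ / (2 * Real.cos θ)) : ℝ) : ℂ), 1] := by
  obtain ⟨hθ1, hθ2⟩ := hθ
  have hc : 0 < Real.cos θ := Real.cos_pos_of_mem_Ioo ⟨by linarith [Real.pi_pos], hθ2⟩
  have hs : 0 < Real.sin θ := Real.sin_pos_of_pos_of_lt_pi hθ1 (by linarith [Real.pi_pos])
  have hpyth := Real.sin_sq_add_cos_sq θ
  obtain ⟨f, hf⟩ := (Submodule.mem_span_range_iff_exists_fun ℝ).mp hspan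
  rw [Fin.sum_univ_three] at hf
  simp only [Matrix.cons_val_zero, Matrix.cons_val_one, Matrix.head_cons,
    Matrix.cons_val_two, Matrix.tail_cons] at hf
  set a := f 0; set b := f 1; set c := f 2
  have hlit : Itil = !![((a + b + c * Real.cos θ ^ 2 : ℝ) : ℂ), ((c * (Real.cos θ * Real.sin θ) : ℝ) : ℂ);
      ((c * (Real.cos θ * Real.sin θ) : ℝ) : ℂ), ((a + c * Real.sin θ ^ 2 : ℝ) : ℂ)] := by
    rw [← hf]
    ext i j
    fin_cases i <;> fin_cases j <;>
      simp [proj0, projTheta, Matrix.one_apply] <;> push_cast <;> ring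
  have e0 := hdual 0
  have e1 := hdual 1
  have e2 := hdual 2
  rw [hlit] at e0 e1 e2 ⊢
  simp only [Matrix.cons_val_zero, Matrix.cons_val_one, Matrix.head_cons,
    Matrix.cons_val_two, Matrix.tail_cons, proj0, projTheta, one_mul,
    Matrix.one_fin_two, Matrix.mul_fin_two, Matrix.trace_fin_two_of,
    if_true, if_false] at e0 e1 e2
  norm_num [Fin.ext_iff] at e0 e1 e2
  have E0 : a + b + c * Real.cos θ ^ 2 + (a + c * Real.sin θ ^ 2) = 1 := by exact_mod_cast e0
  have E1 : a + b + c * Real.cos θ ^ 2 = 0 := by exact_mod_cast e1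
  have E2 : Real.cos θ ^ 2 * (a + b + c * Real.cos θ ^ 2) +
        Real.cos θ * Real.sin θ * (c * (Real.cos θ * Real.sin θ)) +
      (Real.cos θ * Real.sin θ * (c * (Real.cos θ * Real.sin θ)) +
        Real.sin θ ^ 2 * (a + c * Real.sin θ ^ 2)) = 0 := by exact_mod_cast e2
  have h1 : a + c * Real.sin θ ^ 2 = 1 := by linarith
  have h2 : c * (Real.cos θ * Real.sin θ) = -(Real.sin θ / (2 * Real.cos θ)) := by
    field_simp
    have h3 : Real.sin θ ^ 2 * (c * Real.cos θ ^ 2 * 2 + 1) = 0 := by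
      rw [E1, h1] at E2; linear_combination E2
    have h4 := (mul_eq_zero.mp h3).resolve_left (by positivity)
    linarith
  rw [E1, h1, h2]
  norm_num

/-- Auxiliary: coordinates of the Euclidean CLM of a matrix. -/
lemma clm_apply' (A : Matrix (Fin 2) (Fin 2) ℂ) (x : EuclideanSpace ℂ (Fin 2)) (i : Fin 2) :
    (Matrix.toEuclideanCLM (𝕜 := ℂ) A x) i = A.mulVec (WithLp.equiv 2 _ x) i := by
  have := Matrix.ofLp_toEuclideanCLM (𝕜 := ℂ) A x
  simpa using congrFun this i

/-- Auxiliary: the operator norm of `!![0, -u; -u, 1]`. -/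
lemma norm_part (u r : ℝ) (hu : 0 ≤ u) (hr : 1 ≤ r) (hquad : r ^ 2 = r + u ^ 2) :
    ‖Matrix.toEuclideanCLM (𝕜 := ℂ)
      !![0, ((-u : ℝ) : ℂ); ((-u : ℝ) : ℂ), 1]‖ = r := by
  set T := Matrix.toEuclideanCLM (𝕜 := ℂ) !![0, ((-u : ℝ) : ℂ); ((-u : ℝ) : ℂ), 1] with hT
  have hr0 : (0 : ℝ) ≤ r := by linarith
  have happ : ∀ x : EuclideanSpace ℂ (Fin 2),
      (T x) 0 = -(u : ℂ) * x 1 ∧ (T x) 1 = -(u : ℂ) * x 0 + x 1 := by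
    intro x
    constructor <;> rw [hT, clm_apply'] <;>
      simp [Matrix.mulVec, dotProduct, Fin.sum_univ_two]
  have hB0 : (0:ℝ) ≤ r - 1 := by linarith
  set SA := Real.sqrt r with hSA
  set SB := Real.sqrt (r - 1) with hSB
  have hSA2 : SA ^ 2 = r := Real.sq_sqrt hr0
  have hSB2 : SB ^ 2 = r - 1 := Real.sq_sqrt hB0
  have hSASB : SA * SB = u := by
    rw [hSA, hSB, ← Real.sqrt_mul hr0]
    have : r * (r - 1) = u ^ 2 := by nlinarith
    rw [this, Real.sqrt_sq hu]
  apply le_antisymm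
  · apply ContinuousLinearMap.opNorm_le_bound _ hr0
    intro x
    obtain ⟨h0, h1⟩ := happ x
    set p := ‖x 0‖ with hp
    set q := ‖x 1‖ with hq
    have hp0 : 0 ≤ p := norm_nonneg _
    have hq0 : 0 ≤ q := norm_nonneg _
    have hn0 : ‖(T x) 0‖ = u * q := by
      rw [h0, norm_mul]
      simp [hq, abs_of_nonneg hu]
    have hn1 : ‖(T x) 1‖ ≤ u * p + q := by
      rw [h1]
      refine (norm_add_le _ _).trans ?_
      rw [norm_mul]
      simp [hp, hq, abs_of_nonneg hu]
    have hAM : 0 ≤ r * p ^ 2 + (r - 1) * q ^ 2 - 2 * u * (p * q) := by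
      have h := sq_nonneg (SA * p - SB * q)
      have hexp : (SA * p - SB * q) ^ 2
          = SA ^ 2 * p ^ 2 + SB ^ 2 * q ^ 2 - 2 * (SA * SB) * (p * q) := by ring
      rw [hexp, hSA2, hSB2, hSASB] at h
      linarith
    have key : (u * q) ^ 2 + (u * p + q) ^ 2 ≤ r ^ 2 * (p ^ 2 + q ^ 2) := by
      have hid : r ^ 2 * (p ^ 2 + q ^ 2) - ((u * q) ^ 2 + (u * p + q) ^ 2)
          = r * p ^ 2 + (r - 1) * q ^ 2 - 2 * u * (p * q) := by
        linear_combination (p ^ 2 + q ^ 2) * hquad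
      linarith
    have hxnorm : ‖x‖ = Real.sqrt (p ^ 2 + q ^ 2) := by
      rw [EuclideanSpace.norm_eq, Fin.sum_univ_two, hp, hq]
    have hTxnorm : ‖T x‖ = Real.sqrt (‖(T x) 0‖ ^ 2 + ‖(T x) 1‖ ^ 2) := by
      rw [EuclideanSpace.norm_eq, Fin.sum_univ_two]
    have hsq : ‖T x‖ ^ 2 ≤ (r * ‖x‖) ^ 2 := by
      rw [hTxnorm, Real.sq_sqrt (by positivity), hxnorm, mul_pow,
        Real.sq_sqrt (by positivity)]
      have h1' : ‖(T x) 1‖ ^ 2 ≤ (u * p + q) ^ 2 :=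
        pow_le_pow_left₀ (norm_nonneg _) hn1 2
      rw [hn0]; linarith
    have hTx0 : 0 ≤ ‖T x‖ := norm_nonneg _
    have hrx0 : 0 ≤ r * ‖x‖ := by positivity
    nlinarith
  · set v : EuclideanSpace ℂ (Fin 2) := (WithLp.equiv 2 _).symm ![(-u : ℂ), (r : ℂ)] with hv
    have hv0 : v 0 = (-u : ℂ) := rfl
    have hv1 : v 1 = (r : ℂ) := rfl
    obtain ⟨h0, h1⟩ := happ v
    have hTv : T v = (r : ℂ) • v := by
      have hco : ∀ i, T v i = ((r : ℂ) • v) i := by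
        rw [Fin.forall_fin_two]
        constructor
        · rw [h0, PiLp.smul_apply, hv1, hv0, smul_eq_mul]; ring
        · rw [h1, PiLp.smul_apply, hv1, hv0, smul_eq_mul]
          have hqC : ((r : ℂ)) ^ 2 = (r : ℂ) + (u : ℂ) ^ 2 := by
            exact_mod_cast hquad
          linear_combination -hqC
      exact PiLp.ext hco
    have hvnorm : 0 < ‖v‖ := by
      rw [norm_pos_iff]
      intro h
      have h1' : v 1 = 0 := by rw [h]; rfl
      rw [hv1] at h1'
      have : r = 0 := Complex.ofReal_eq_zero.mp h1'
      linarith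
    have hle := ContinuousLinearMap.le_opNorm T v
    rw [hTv, norm_smul] at hle
    have hnr : ‖(r : ℂ)‖ = r := by
      simp [Complex.norm_real, abs_of_nonneg hr0]
    rw [hnr] at hle
    exact le_of_mul_le_mul_right hle hvnorm

/-- The dual element `Ĩ` of the Hilbert–Schmidt dual system of `{I, |0⟩⟨0|, |θ⟩⟨θ|}`
has operator norm `1/(2 cos θ) + 1/2`. -/
theorem dual_identity_norm (θ : ℝ) (hθ : θ ∈ Set.Ioo 0 (π / 2))
    (Itil M0til M1til : Matrix (Fin 2) (Fin 2) ℂ)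
    (hHerm : ∀ j, (![Itil, M0til, M1til] j).IsHermitian)
    (hspan : ∀ j, ![Itil, M0til, M1til] j ∈
      Submodule.span ℝ (Set.range ![(1 : Matrix (Fin 2) (Fin 2) ℂ), proj0, projTheta θ]))
    (hdual : ∀ i j, ((![(1 : Matrix (Fin 2) (Fin 2) ℂ), proj0, projTheta θ] i) *
      (![Itil, M0til, M1til] j)).trace = if i = j then 1 else 0) :
    ‖Matrix.toEuclideanCLM (𝕜 := ℂ) Itil‖ = 1 / (2 * Real.cos θ) + 1 / 2 := by
  obtain ⟨hθ1, hθ2⟩ := hθ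
  have hc : 0 < Real.cos θ := Real.cos_pos_of_mem_Ioo ⟨by linarith [Real.pi_pos], hθ2⟩
  have hc1 : Real.cos θ ≤ 1 := Real.cos_le_one θ
  have hs : 0 < Real.sin θ := Real.sin_pos_of_pos_of_lt_pi hθ1 (by linarith [Real.pi_pos])
  have hpyth := Real.sin_sq_add_cos_sq θ
  have hspan0 := hspan 0
  simp only [Matrix.cons_val_zero] at hspan0
  have hdual0 : ∀ i, ((![(1 : Matrix (Fin 2) (Fin 2) ℂ), proj0, projTheta θ] i) *
      Itil).trace = if i = 0 then 1 else 0 := by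
    intro i
    have := hdual i 0
    simpa using this
  have hItil := dual_identity_eq θ ⟨hθ1, hθ2⟩ Itil hspan0 hdual0
  rw [hItil]
  have hu : 0 ≤ Real.sin θ / (2 * Real.cos θ) := by positivity
  have hr : 1 ≤ 1 / (2 * Real.cos θ) + 1 / 2 := by
    have h2 : 1 / 2 ≤ 1 / (2 * Real.cos θ) :=
      one_div_le_one_div_of_le (by linarith) (by linarith)
    linarith
  have hquad : (1 / (2 * Real.cos θ) + 1 / 2) ^ 2
      = (1 / (2 * Real.cos θ) + 1 / 2) + (Real.sin θ / (2 * Real.cos θ)) ^ 2 := by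
    have hs2 : Real.sin θ ^ 2 = 1 - Real.cos θ ^ 2 := by linarith
    rw [div_pow, hs2]
    field_simp
    ring
  exact norm_part (Real.sin θ / (2 * Real.cos θ)) (1 / (2 * Real.cos θ) + 1 / 2) hu hr hquad
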